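/- Let X ~ N(μ, σ²) on ℝ and C ⊆ ℝ be a convex set (interval) with P(X ∈ C) > 0. Then Var(X | X ∈ C) ≤ Var(X) = σ². -/

import Mathlib

open MeasureTheory Real Set Filter ProbabilityTheory
open scoped NNReal ENNReal

noncomputable section

namespace Kanter16

lemma sq_mul_exp_le (b v : ℝ) (hb : 0 < b) :
    v^2 * Real.exp (-(b/2*v^2)) ≤ 2/b := by
  have h1 : b/2*v^2 + 1 ≤ Real.exp (b/2*v^2) := by
    linarith [Real.add_one_le_exp (b/2*v^2)]
  have h2 : Real.exp (-(b/2*v^2)) * Real.exp (b/2*v^2) = 1 := by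
    rw [← Real.exp_add]; simp
  have h3 : Real.exp (-(b/2*v^2)) * (b/2*v^2 + 1) ≤ 1 := by
    calc Real.exp (-(b/2*v^2)) * (b/2*v^2 + 1)
        ≤ Real.exp (-(b/2*v^2)) * Real.exp (b/2*v^2) :=
          mul_le_mul_of_nonneg_left h1 (Real.exp_pos _).le
      _ = 1 := h2
  have h4 := (Real.exp_pos (-(b/2*v^2))).le
  have h5 : Real.exp (-(b/2*v^2)) * (b/2*v^2) ≤ 1 - Real.exp (-(b/2*v^2)) := by linarith
  have h6 := mul_le_mul_of_nonneg_left h5 (le_of_lt (show (0:ℝ) < 2/b by positivity))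
  have h7 : (2/b) * (Real.exp (-(b/2*v^2)) * (b/2*v^2)) = v^2 * Real.exp (-(b/2*v^2)) := by
    field_simp
  have h8 : (2/b) * (1 - Real.exp (-(b/2*v^2))) ≤ (2/b) * 1 :=
    mul_le_mul_of_nonneg_left (by linarith) (le_of_lt (show (0:ℝ) < 2/b by positivity))
  rw [h7] at h6
  linarith

lemma integrable_sq_mul_exp {b : ℝ} (hb : 0 < b) :
    Integrable (fun v : ℝ => v^2 * Real.exp (-b*v^2)) := by
  apply Integrable.mono' ((integrable_exp_neg_mul_sq (show 0 < b/2 by linarith)).const_mul (2/b))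
  · exact ((continuous_pow 2).mul (Real.continuous_exp.comp (by continuity))).aestronglyMeasurable
  · filter_upwards with v
    rw [Real.norm_eq_abs, abs_of_nonneg (by positivity)]
    have h : (-b*v^2) = (-(b/2*v^2)) + (-(b/2*v^2)) := by ring
    rw [h, Real.exp_add, ← mul_assoc]
    have h2 := sq_mul_exp_le b v hb
    have h3 := (Real.exp_pos (-(b/2*v^2))).le
    calc v ^ 2 * Real.exp (-(b / 2 * v ^ 2)) * Real.exp (-(b / 2 * v ^ 2))
        ≤ (2/b) * Real.exp (-(b / 2 * v ^ 2)) := mul_le_mul_of_nonneg_right h2 h3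
      _ = 2 / b * Real.exp (-(b / 2) * v ^ 2) := by ring_nf

lemma integrable_g {b : ℝ} (hb : 0 < b) :
    Integrable (fun v : ℝ => (v^2 - (2*b)⁻¹) * Real.exp (-b*v^2)) := by
  apply Integrable.congr ((integrable_sq_mul_exp hb).sub
    ((integrable_exp_neg_mul_sq hb).const_mul (2*b)⁻¹))
  filter_upwards with v
  simp only [Pi.sub_apply]
  ring

lemma hasDeriv_F {b : ℝ} (hb : 0 < b) (v : ℝ) :
    HasDerivAt (fun v : ℝ => -(2*b)⁻¹ * v * Real.exp (-b*v^2))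
      ((v^2 - (2*b)⁻¹) * Real.exp (-b*v^2)) v := by
  have h1 : HasDerivAt (fun v : ℝ => -b*v^2) (-b*(2*v)) v := by
    simpa using ((hasDerivAt_pow 2 v).const_mul (-b))
  have h2 : HasDerivAt (fun v : ℝ => Real.exp (-b*v^2)) (Real.exp (-b*v^2) * (-b*(2*v))) v :=
    (Real.hasDerivAt_exp _).comp v h1
  have h3 : HasDerivAt (fun v : ℝ => -(2*b)⁻¹ * v) (-(2*b)⁻¹) v := by
    simpa using (hasDerivAt_id v).const_mul (-(2*b)⁻¹)
  have := h3.mul h2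
  refine this.congr_deriv ?_
  field_simp
  ring

lemma interval_int_g {b : ℝ} (hb : 0 < b) (r : ℝ) :
    ∫ v in (-r)..r, (v^2 - (2*b)⁻¹) * Real.exp (-b*v^2)
      = -(b⁻¹ * r * Real.exp (-b*r^2)) := by
  rw [intervalIntegral.integral_eq_sub_of_hasDerivAt (fun v _ => hasDeriv_F hb v)
    ((integrable_g hb).intervalIntegrable)]
  have h : (-r)^2 = r^2 := by ring
  rw [h]
  field_simp
  ring

/-- Lemma A : the integral of `(v² - (2b)⁻¹) e^{-bv²}` over a symmetric convex set
is nonpositive. -/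
lemma lemA {b : ℝ} (hb : 0 < b) {S : Set ℝ} (hconv : Convex ℝ S)
    (hsym : ∀ v ∈ S, -v ∈ S) :
    ∫ v in S, (v^2 - (2*b)⁻¹) * Real.exp (-b*v^2) ≤ 0 := by
  rcases S.eq_empty_or_nonempty with rfl | ⟨v₀, hv₀⟩
  · simp
  have habs : |v₀| ∈ S := by
    rcases abs_cases v₀ with ⟨h, _⟩ | ⟨h, _⟩ <;> rw [h]
    · exact hv₀
    · exact hsym _ hv₀
  have h0 : (0:ℝ) ∈ S :=
    hconv.ordConnected.out (hsym _ habs) habs ⟨neg_nonpos.mpr (abs_nonneg _), abs_nonneg _⟩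
  by_cases hbdd : BddAbove S
  · set r := sSup S with hr
    have hrnn : 0 ≤ r := le_csSup hbdd h0
    have hsub : S ⊆ Icc (-r) r := by
      intro v hv
      exact ⟨by simpa using neg_le_neg (le_csSup hbdd (hsym v hv)), le_csSup hbdd hv⟩
    have hsup : Ioo (-r) r ⊆ S := by
      intro v hv
      obtain ⟨w, hw, hvw⟩ := exists_lt_of_lt_csSup ⟨v₀, hv₀⟩ hv.2
      obtain ⟨w', hw', hvw'⟩ := exists_lt_of_lt_csSup ⟨v₀, hv₀⟩ (by linarith [hv.1] : -v < r)
      exact hconv.ordConnected.out (hsym w' hw') hw ⟨by linarith, hvw.le⟩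
    have haeq : S =ᵐ[volume] Ioc (-r) r := by
      rw [MeasureTheory.ae_eq_set]
      constructor
      · refine measure_mono_null (fun v hv => ?_) (measure_singleton (-r))
        have h1 := hsub hv.1
        have h2 := hv.2
        simp only [mem_Ioc, not_and_or, not_lt, not_le] at h2
        rcases h2 with h2 | h2
        · simp only [mem_singleton_iff]; linarith [h1.1]
        · exact absurd h1.2 (not_le.mpr h2)
      · refine measure_mono_null (fun v hv => ?_) (measure_singleton r)
        have h1 := hv.1
        have h2 := hv.2
        simp only [mem_singleton_iff]
        by_contra hne
        exact h2 (hsup ⟨h1.1, lt_of_le_of_ne h1.2 hne⟩)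
    rw [setIntegral_congr_set haeq, ← intervalIntegral.integral_of_le (by linarith : -r ≤ r),
      interval_int_g hb]
    have : 0 ≤ b⁻¹ * r * Real.exp (-b*r^2) := by positivity
    linarith
  · have hS : S = univ := by
      ext y
      simp only [mem_univ, iff_true]
      obtain ⟨w, hw, hyw⟩ := not_bddAbove_iff.mp hbdd (|y|)
      have hy : y ∈ Icc (-w) w :=
        ⟨by cases abs_cases y <;> linarith, by cases abs_cases y <;> linarith⟩
      exact hconv.ordConnected.out (hsym w hw) hw hy
    rw [hS, Measure.restrict_univ]
    have hlim : Tendsto (fun r : ℝ => ∫ v in (-r)..r, (v^2 - (2*b)⁻¹) * Real.exp (-b*v^2))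
        atTop (nhds (∫ v, (v^2 - (2*b)⁻¹) * Real.exp (-b*v^2))) :=
      intervalIntegral_tendsto_integral (integrable_g hb) tendsto_neg_atTop_atBot tendsto_id
    have hlim2 : Tendsto (fun r : ℝ => -(b⁻¹ * r * Real.exp (-b*r^2))) atTop (nhds 0) := by
      rw [show (0:ℝ) = -(b⁻¹ * 0) by ring]
      simp only [mul_assoc]
      apply Tendsto.neg
      apply Tendsto.const_mul
      have hsq : Tendsto (fun r : ℝ => r * Real.exp (-r)) atTop (nhds 0) := by
        simpa using Real.tendsto_pow_mul_exp_neg_atTop_nhds_zero 1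
      apply squeeze_zero'
      · filter_upwards [eventually_ge_atTop (0:ℝ)] with r hr
        positivity
      · filter_upwards [eventually_ge_atTop (0:ℝ), eventually_ge_atTop b⁻¹] with r hr1 hr2
        have : Real.exp (-b*r^2) ≤ Real.exp (-r) := by
          apply Real.exp_le_exp.mpr
          have hb1 : 1 ≤ b * r := by
            rw [show (1:ℝ) = b * b⁻¹ by field_simp]
            exact mul_le_mul_of_nonneg_left hr2 hb.le
          nlinarith [mul_le_mul_of_nonneg_left hb1 hr1]
        exact mul_le_mul_of_nonneg_left this hr1
      · exact hsq
    have heq := tendsto_nhds_unique (by simpa only [interval_int_g hb] using hlim) hlim2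
    rw [heq]

lemma int_exp_shift {b : ℝ} (hb : 0 < b) (m : ℝ) :
    Integrable (fun x : ℝ => Real.exp (-b*(x-m)^2)) :=
  (integrable_exp_neg_mul_sq hb).comp_sub_right m

lemma int_mul_exp_shift {b : ℝ} (hb : 0 < b) (m : ℝ) :
    Integrable (fun x : ℝ => x * Real.exp (-b*(x-m)^2)) := by
  have base : Integrable (fun y : ℝ => (y + m) * Real.exp (-b*y^2)) := by
    apply Integrable.congr ((integrable_mul_exp_neg_mul_sq hb).add
      ((integrable_exp_neg_mul_sq hb).const_mul m))
    filter_upwards with y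
    simp only [Pi.add_apply]
    ring
  apply Integrable.congr (base.comp_sub_right m)
  filter_upwards with x
  simp only [sub_add_cancel]

lemma int_sq_mul_exp_shift {b : ℝ} (hb : 0 < b) (m : ℝ) :
    Integrable (fun x : ℝ => x^2 * Real.exp (-b*(x-m)^2)) := by
  have base : Integrable (fun y : ℝ => (y + m)^2 * Real.exp (-b*y^2)) := by
    apply Integrable.congr (((integrable_sq_mul_exp hb).add
      ((integrable_mul_exp_neg_mul_sq hb).const_mul (2*m))).add
      ((integrable_exp_neg_mul_sq hb).const_mul (m^2)))
    filter_upwards with y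
    simp only [Pi.add_apply]
    ring
  apply Integrable.congr (base.comp_sub_right m)
  filter_upwards with x
  simp only [sub_add_cancel]

def Lrot : (ℝ × ℝ) →ₗ[ℝ] (ℝ × ℝ) where
  toFun p := (p.1 + p.2, p.1 - p.2)
  map_add' p q := by simp [Prod.ext_iff]; constructor <;> ring
  map_smul' c p := by simp [Prod.ext_iff, smul_eq_mul]; constructor <;> ring

lemma Lrot_det : LinearMap.det Lrot = -2 := by
  have h : LinearMap.toMatrix (Module.Basis.finTwoProd ℝ) (Module.Basis.finTwoProd ℝ) Lrot
      = !![1, 1; 1, -1] := by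
    ext i j
    fin_cases i <;> fin_cases j <;>
      simp [LinearMap.toMatrix_apply, Lrot, Module.Basis.coe_finTwoProd_repr,
        Module.Basis.finTwoProd_zero, Module.Basis.finTwoProd_one]
  have h2 := LinearMap.det_toMatrix (Module.Basis.finTwoProd ℝ) Lrot
  rw [h] at h2
  rw [← h2, Matrix.det_fin_two_of]
  norm_num

lemma Lrot_map_volume : Measure.map Lrot (volume : Measure (ℝ × ℝ))
    = ENNReal.ofReal (1/2) • volume := by
  rw [Measure.map_linearMap_addHaar_eq_smul_addHaar volume (by rw [Lrot_det]; norm_num),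
    Lrot_det, show ((-2:ℝ))⁻¹ = -(1/2) by norm_num, abs_neg,
    abs_of_nonneg (by norm_num : (0:ℝ) ≤ 1/2)]

lemma Lrot_integral (G : (ℝ × ℝ) → ℝ) (hG : Measurable G) :
    ∫ p, G p = 2 * ∫ p, G (Lrot p) := by
  have h1 : ∫ p, G (Lrot p) = ∫ p, G p ∂(Measure.map Lrot (volume : Measure (ℝ × ℝ))) := by
    rw [integral_map (Lrot.continuous_of_finiteDimensional).aemeasurable
      hG.aestronglyMeasurable]
  rw [h1, Lrot_map_volume, integral_smul_measure]
  rw [ENNReal.toReal_ofReal (by norm_num), smul_eq_mul]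
  ring

lemma Lrot_integrable (G : (ℝ × ℝ) → ℝ) (hG : Measurable G)
    (hGi : Integrable G (volume : Measure (ℝ × ℝ))) :
    Integrable (fun p => G (Lrot p)) (volume : Measure (ℝ × ℝ)) := by
  have h1 : Integrable G (Measure.map Lrot (volume : Measure (ℝ × ℝ))) := by
    rw [Lrot_map_volume]
    exact hGi.smul_measure ENNReal.ofReal_ne_top
  exact (integrable_map_measure hG.aestronglyMeasurable
    (Lrot.continuous_of_finiteDimensional).aemeasurable).mp h1

end Kanter16

open Kanter16

/-- Kanter's variance reduction under convex truncation, 1-D Gaussian case: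
if `X ~ N(m, σ²)` and `C ⊆ ℝ` is convex with `P(X ∈ C) > 0`, then
`Var(X | X ∈ C) ≤ σ²`. -/
theorem stmt16 (m σ : ℝ) (C : Set ℝ) (hC : Convex ℝ C)
    (hpos : 0 < gaussianReal m (Real.toNNReal (σ ^ 2)) C) :
    variance id (ProbabilityTheory.cond (gaussianReal m (Real.toNNReal (σ ^ 2))) C)
      ≤ σ ^ 2 := by
  have hCm : MeasurableSet C := hC.ordConnected.measurableSet
  by_cases hσ : σ = 0
  · -- Dirac case
    subst hσ
    have h0 : Real.toNNReal ((0:ℝ)^2) = 0 := by norm_num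
    rw [h0, gaussianReal_zero_var] at hpos ⊢
    have hm : m ∈ C := by
      by_contra hm
      rw [Measure.dirac_apply' m hCm, Set.indicator_of_notMem hm] at hpos
      exact lt_irrefl 0 hpos
    have hrestr : (Measure.dirac m).restrict C = Measure.dirac m := by
      classical
      rw [MeasureTheory.restrict_dirac' hCm, if_pos hm]
    have hcond : ProbabilityTheory.cond (Measure.dirac m) C = Measure.dirac m := by
      rw [ProbabilityTheory.cond, hrestr, Measure.dirac_apply_of_mem hm]
      simp
    rw [hcond]
    have hmem : MemLp (id : ℝ → ℝ) 2 (Measure.dirac m) :=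
      MemLp.ae_eq (MeasureTheory.ae_eq_dirac (id : ℝ → ℝ)).symm (memLp_const m)
    rw [variance_eq_sub hmem]
    rw [integral_dirac, integral_dirac]
    norm_num
  -- main case
  have hσ2 : (0:ℝ) < σ^2 := by positivity
  set V : ℝ≥0 := Real.toNNReal (σ^2) with hVdef
  have hV : (V : ℝ) = σ^2 := Real.coe_toNNReal _ hσ2.le
  have hVne : V ≠ 0 := by
    intro h
    rw [h] at hV
    simp at hV
    linarith
  set ν := gaussianReal m V with hν
  have hprob : IsProbabilityMeasure ν := by infer_instance
  set f : ℝ → ℝ := gaussianPDFReal m V with hfdef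
  set b : ℝ := (2*σ^2)⁻¹ with hbdef
  have hb : 0 < b := by positivity
  have hf_eq : ∀ x, f x = (Real.sqrt (2*π*σ^2))⁻¹ * Real.exp (-b*(x-m)^2) := by
    intro x
    rw [hfdef, gaussianPDFReal, hV]
    congr 1
    rw [hbdef]
    ring
  have hf_nonneg : ∀ x, 0 ≤ f x := fun x => gaussianPDFReal_nonneg m V x
  have hf_meas : Measurable f := measurable_gaussianPDFReal m V
  have hmeas' : Measurable (fun x => (f x).toNNReal) := hf_meas.real_toNNReal
  -- the density representation
  have hνd : ν = volume.withDensity (fun x => ((f x).toNNReal : ℝ≥0∞)) := by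
    rw [hν, gaussianReal_of_var_ne_zero m hVne]
    rfl
  -- the three 1-D integrable functions
  set g0 : ℝ → ℝ := C.indicator f with hg0
  set g1 : ℝ → ℝ := C.indicator (fun x => f x * x) with hg1
  set g2 : ℝ → ℝ := C.indicator (fun x => f x * x^2) with hg2
  have hint_f : Integrable f := integrable_gaussianPDFReal m V
  have hint_xf : Integrable (fun x => f x * x) := by
    apply Integrable.congr (((int_mul_exp_shift hb m).const_mul (Real.sqrt (2*π*σ^2))⁻¹))
    filter_upwards with x
    rw [hf_eq x]; ring
  have hint_x2f : Integrable (fun x => f x * x^2) := by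
    apply Integrable.congr (((int_sq_mul_exp_shift hb m).const_mul (Real.sqrt (2*π*σ^2))⁻¹))
    filter_upwards with x
    rw [hf_eq x]; ring
  have hint0 : Integrable g0 := hint_f.indicator hCm
  have hint1 : Integrable g1 := hint_xf.indicator hCm
  have hint2 : Integrable g2 := hint_x2f.indicator hCm
  have hmeas0 : Measurable g0 := (hf_meas.indicator hCm)
  have hmeas1 : Measurable g1 := ((hf_meas.mul measurable_id).indicator hCm)
  have hmeas2 : Measurable g2 := ((hf_meas.mul (measurable_id.pow_const 2)).indicator hCm)
  -- moments as Lebesgue integrals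
  set A : ℝ := ∫ x, g0 x with hA
  set B : ℝ := ∫ x, g1 x with hB
  set Q : ℝ := ∫ x, g2 x with hQ
  have hνC_lt_top : ν C ≠ ⊤ := measure_ne_top ν C
  have hνC_ne : ν C ≠ 0 := ne_of_gt hpos
  -- set-integral conversion
  have hsetint : ∀ g : ℝ → ℝ, ∫ x in C, g x ∂ν = ∫ x, C.indicator (fun y => f y * g y) x := by
    intro g
    rw [hνd, MeasureTheory.restrict_withDensity hCm, integral_withDensity_eq_integral_smul hmeas']
    have h : ∀ x, (f x).toNNReal • g x = f x * g x := fun x => by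
      rw [NNReal.smul_def, Real.coe_toNNReal _ (hf_nonneg x), smul_eq_mul]
    simp_rw [h]
    rw [← integral_indicator hCm]
  have hAeq : (ν C).toReal = A := by
    have h1 : ν C = ENNReal.ofReal (∫ x in C, f x) := by
      rw [hν]; exact gaussianReal_apply_eq_integral m hVne C
    have h2 : A = ∫ x in C, f x := by rw [hA, hg0, integral_indicator hCm]
    rw [h1, ENNReal.toReal_ofReal (setIntegral_nonneg hCm (fun x _ => hf_nonneg x)), h2]
  have hApos : 0 < A := by
    rw [← hAeq]
    exact ENNReal.toReal_pos hνC_ne hνC_lt_top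
  have hcond : ProbabilityTheory.cond ν C = (ν C)⁻¹ • ν.restrict C := rfl
  have hcond_prob : IsProbabilityMeasure (ProbabilityTheory.cond ν C) :=
    cond_isProbabilityMeasure hνC_ne
  have hmom1 : ∫ x, x ∂(ProbabilityTheory.cond ν C) = A⁻¹ * B := by
    rw [hcond, integral_smul_measure, ENNReal.toReal_inv, hAeq]
    have h1 : ∫ x, x ∂(ν.restrict C) = B := by
      have : ∫ x, x ∂(ν.restrict C) = ∫ x in C, (fun y => y) x ∂ν := rfl
      rw [this, hsetint (fun y => y), hB, hg1]
    rw [h1, smul_eq_mul]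
  have hmom2 : ∫ x, x^2 ∂(ProbabilityTheory.cond ν C) = A⁻¹ * Q := by
    rw [hcond, integral_smul_measure, ENNReal.toReal_inv, hAeq]
    have h1 : ∫ x, x^2 ∂(ν.restrict C) = Q := by
      have : ∫ x, x^2 ∂(ν.restrict C) = ∫ x in C, (fun y => y^2) x ∂ν := rfl
      rw [this, hsetint (fun y => y^2), hQ, hg2]
    rw [h1, smul_eq_mul]
  have hmemlp : MemLp id 2 (ProbabilityTheory.cond ν C) := by
    have hsq : Integrable (fun x : ℝ => x^2) ν := by
      rw [hνd, integrable_withDensity_iff (hmeas'.coe_nnreal_ennreal)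
        (Filter.Eventually.of_forall (fun x => ENNReal.coe_lt_top))]
      apply Integrable.congr hint_x2f
      filter_upwards with x
      simp [Real.coe_toNNReal _ (hf_nonneg x)]
      ring
    have hν2 : MemLp (id : ℝ → ℝ) 2 ν := by
      rw [memLp_two_iff_integrable_sq aestronglyMeasurable_id]
      exact hsq
    rw [hcond]
    exact (hν2.restrict C).smul_measure (ENNReal.inv_ne_top.mpr hνC_ne)
  have hvar : variance id (ProbabilityTheory.cond ν C) = A⁻¹ * Q - (A⁻¹ * B)^2 := by
    rw [variance_eq_sub hmemlp, show (id ^ 2 : ℝ → ℝ) = fun x => x^2 from by ext x; simp,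
      show (id : ℝ → ℝ) = fun x => x from rfl, hmom2, hmom1]
  -- THE KEY INEQUALITY via the rotation trick
  have hkey : 2*A*Q - 2*B^2 - 2*σ^2*A^2 ≤ 0 := by
    set G : (ℝ × ℝ) → ℝ := fun p =>
      g0 p.1 * g2 p.2 + g2 p.1 * g0 p.2 - 2*(g1 p.1 * g1 p.2) - 2*σ^2*(g0 p.1 * g0 p.2)
      with hG
    have hGmeas : Measurable G := by
      apply Measurable.sub
      apply Measurable.sub
      apply Measurable.add
      · exact (hmeas0.comp measurable_fst).mul (hmeas2.comp measurable_snd)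
      · exact (hmeas2.comp measurable_fst).mul (hmeas0.comp measurable_snd)
      · exact ((hmeas1.comp measurable_fst).mul (hmeas1.comp measurable_snd)).const_mul 2
      · exact ((hmeas0.comp measurable_fst).mul (hmeas0.comp measurable_snd)).const_mul (2*σ^2)
    have hGint : Integrable G (volume : Measure (ℝ × ℝ)) := by
      rw [Measure.volume_eq_prod]
      apply Integrable.congr
        ((((hint0.mul_prod hint2).add (hint2.mul_prod hint0)).sub
          ((hint1.mul_prod hint1).const_mul 2)).sub
          ((hint0.mul_prod hint0).const_mul (2*σ^2)))
      filter_upwards with p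
      simp only [Pi.sub_apply, Pi.add_apply]
      rfl
    have hGval : ∫ p, G p = 2*A*Q - 2*B^2 - 2*σ^2*A^2 := by
      rw [Measure.volume_eq_prod] at hGint ⊢
      have e1 : Integrable (fun p : ℝ × ℝ => g0 p.1 * g2 p.2 + g2 p.1 * g0 p.2
          - 2*(g1 p.1 * g1 p.2)) (volume.prod volume) := by
        apply Integrable.congr (((hint0.mul_prod hint2).add (hint2.mul_prod hint0)).sub
          ((hint1.mul_prod hint1).const_mul 2))
        filter_upwards with p
        simp only [Pi.sub_apply, Pi.add_apply]
      have e2 : Integrable (fun p : ℝ × ℝ => g0 p.1 * g2 p.2 + g2 p.1 * g0 p.2)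
          (volume.prod volume) := by
        exact (hint0.mul_prod hint2).add (hint2.mul_prod hint0)
      calc ∫ p, G p ∂(volume.prod volume)
          = (∫ p : ℝ × ℝ, (g0 p.1 * g2 p.2 + g2 p.1 * g0 p.2 - 2*(g1 p.1 * g1 p.2))
              ∂(volume.prod volume))
            - ∫ p : ℝ × ℝ, 2*σ^2*(g0 p.1 * g0 p.2) ∂(volume.prod volume) := by
            rw [← integral_sub e1 ((hint0.mul_prod hint0).const_mul (2*σ^2))]
        _ = ((∫ p : ℝ × ℝ, (g0 p.1 * g2 p.2 + g2 p.1 * g0 p.2) ∂(volume.prod volume))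
            - ∫ p : ℝ × ℝ, 2*(g1 p.1 * g1 p.2) ∂(volume.prod volume))
            - ∫ p : ℝ × ℝ, 2*σ^2*(g0 p.1 * g0 p.2) ∂(volume.prod volume) := by
            rw [← integral_sub e2 ((hint1.mul_prod hint1).const_mul 2)]
        _ = (((∫ p : ℝ × ℝ, g0 p.1 * g2 p.2 ∂(volume.prod volume))
            + ∫ p : ℝ × ℝ, g2 p.1 * g0 p.2 ∂(volume.prod volume))
            - ∫ p : ℝ × ℝ, 2*(g1 p.1 * g1 p.2) ∂(volume.prod volume))
            - ∫ p : ℝ × ℝ, 2*σ^2*(g0 p.1 * g0 p.2) ∂(volume.prod volume) := by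
            rw [← integral_add (hint0.mul_prod hint2) (hint2.mul_prod hint0)]
        _ = A*Q + Q*A - 2*(B*B) - 2*σ^2*(A*A) := by
            rw [integral_prod_mul, integral_prod_mul, MeasureTheory.integral_const_mul, MeasureTheory.integral_const_mul,
              integral_prod_mul, integral_prod_mul]
        _ = 2*A*Q - 2*B^2 - 2*σ^2*A^2 := by ring
    -- now the rotated form
    have hrot : ∫ p, G p = 2 * ∫ p, G (Lrot p) := Lrot_integral G hGmeas
    -- pointwise description of G ∘ Lrot
    set K : ℝ := (2*π*σ^2)⁻¹ with hK
    set Sc : ℝ → Set ℝ := fun c => {d | c + d ∈ C ∧ c - d ∈ C} with hSc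
    have hff : ∀ c d : ℝ, f (c+d) * f (c-d)
        = K * (Real.exp (-(2*b)*(c-m)^2) * Real.exp (-(2*b)*d^2)) := by
      intro c d
      have hsq : (Real.sqrt (2*π*σ^2))⁻¹ * (Real.sqrt (2*π*σ^2))⁻¹ = K := by
        rw [← mul_inv, Real.mul_self_sqrt (by positivity)]
      calc f (c+d) * f (c-d)
          = ((Real.sqrt (2*π*σ^2))⁻¹ * (Real.sqrt (2*π*σ^2))⁻¹)
            * Real.exp (-b*(c+d-m)^2 + -b*(c-d-m)^2) := by
            rw [hf_eq, hf_eq, Real.exp_add]; ring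
        _ = K * (Real.exp (-(2*b)*(c-m)^2) * Real.exp (-(2*b)*d^2)) := by
            rw [hsq, ← Real.exp_add]
            congr 1
            ring
    have hGL : ∀ c d : ℝ, G (Lrot (c, d)) = (K * Real.exp (-(2*b)*(c-m)^2))
        * (Sc c).indicator (fun d => (4*d^2 - 2*σ^2) * Real.exp (-(2*b)*d^2)) d := by
      intro c d
      have hL : Lrot (c, d) = (c + d, c - d) := rfl
      rw [hL, hG]
      by_cases h1 : c + d ∈ C
      · by_cases h2 : c - d ∈ C
        · have hd : d ∈ Sc c := ⟨h1, h2⟩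
          simp only [hg0, hg1, hg2, Set.indicator_of_mem h1, Set.indicator_of_mem h2,
            Set.indicator_of_mem hd]
          have hlhs : f (c+d) * (f (c-d) * (c-d)^2) + f (c+d) * (c+d)^2 * f (c-d)
              - 2*(f (c+d) * (c+d) * (f (c-d) * (c-d))) - 2*σ^2*(f (c+d) * f (c-d))
              = (f (c+d) * f (c-d)) * (4*d^2 - 2*σ^2) := by ring
          rw [hlhs, hff]
          ring
        · have hd : d ∉ Sc c := fun h => h2 h.2
          simp only [hg0, hg1, hg2, Set.indicator_of_notMem h2, Set.indicator_of_notMem hd]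
          ring
      · have hd : d ∉ Sc c := fun h => h1 h.1
        simp only [hg0, hg1, hg2, Set.indicator_of_notMem h1, Set.indicator_of_notMem hd]
        ring
    -- integrability of the rotated function
    have hGLint : Integrable (fun p : ℝ × ℝ => G (Lrot p)) (volume : Measure (ℝ × ℝ)) :=
      Lrot_integrable G hGmeas hGint
    -- iterated integral
    rw [Measure.volume_eq_prod] at hGLint
    have hiter : ∫ p : ℝ × ℝ, G (Lrot p)
        = ∫ c, ∫ d, G (Lrot (c, d)) := by
      rw [Measure.volume_eq_prod]
      exact integral_prod _ hGLint
    -- inner integral bound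
    have hinner : ∀ c : ℝ, ∫ d, G (Lrot (c, d)) ≤ 0 := by
      intro c
      have hScm : MeasurableSet (Sc c) := by
        have hh : Sc c = ((fun d => c + d) ⁻¹' C) ∩ ((fun d => c - d) ⁻¹' C) := by
          ext d; simp [hSc]
        rw [hh]
        exact (hCm.preimage (measurable_const_add c)).inter
          (hCm.preimage (measurable_id.const_sub c))
      have hconvS : Convex ℝ (Sc c) := by
        intro d1 hd1 d2 hd2 a a' ha ha' hab
        simp only [hSc, Set.mem_setOf_eq] at hd1 hd2 ⊢
        constructor
        · have h := hC hd1.1 hd2.1 ha ha' hab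
          have hh : a • (c + d1) + a' • (c + d2) = c + (a • d1 + a' • d2) := by
            simp only [smul_eq_mul]; linear_combination c * hab
          rwa [hh] at h
        · have h := hC hd1.2 hd2.2 ha ha' hab
          have hh : a • (c - d1) + a' • (c - d2) = c - (a • d1 + a' • d2) := by
            simp only [smul_eq_mul]; linear_combination c * hab
          rwa [hh] at h
      have hsymS : ∀ v ∈ Sc c, -v ∈ Sc c := by
        intro v hv
        simp only [hSc, Set.mem_setOf_eq] at hv ⊢
        constructor
        · rw [show c + -v = c - v by ring]; exact hv.2
        · rw [show c - -v = c + v by ring]; exact hv.1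
      simp_rw [hGL c]
      rw [MeasureTheory.integral_const_mul, integral_indicator hScm]
      have hptw : ∀ d : ℝ, (4*d^2 - 2*σ^2) * Real.exp (-(2*b)*d^2)
          = 4 * ((d^2 - (2*(2*b))⁻¹) * Real.exp (-(2*b)*d^2)) := by
        intro d
        rw [hbdef]
        have hh2 : (2*(2*(2*σ^2)⁻¹))⁻¹ = σ^2/2 := by
          rw [show 2*(2*(2*σ^2)⁻¹) = 2/σ^2 by field_simp]
          rw [show (2/σ^2)⁻¹ = σ^2/2 by field_simp]
        rw [hh2]
        ring
      simp_rw [hptw]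
      rw [MeasureTheory.integral_const_mul]
      have hb2 : (0:ℝ) < 2*b := by linarith
      have hlem := lemA hb2 hconvS hsymS
      have hfac : (0:ℝ) ≤ K * Real.exp (-(2*b)*(c-m)^2) := by
        rw [hK]; positivity
      have h4 : 4 * ∫ d in Sc c, (d^2 - (2*(2*b))⁻¹) * Real.exp (-(2*b)*d^2) ≤ 0 := by
        linarith
      exact mul_nonpos_iff.mpr (Or.inl ⟨hfac, h4⟩)
    -- combine
    calc 2*A*Q - 2*B^2 - 2*σ^2*A^2 = ∫ p, G p := hGval.symm
      _ = 2 * ∫ p, G (Lrot p) := hrot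
      _ = 2 * ∫ c, ∫ d, G (Lrot (c, d)) := by rw [hiter]
      _ ≤ 0 := by
          have h := integral_nonpos (μ := (volume : Measure ℝ))
            (f := fun c => ∫ d, G (Lrot (c, d))) (fun c => hinner c)
          linarith
  rw [hvar]
  have h2 : A⁻¹ * Q - (A⁻¹ * B)^2 = (2*A*Q - 2*B^2) / (2*A^2) := by
    field_simp
  rw [h2, div_le_iff₀ (by positivity)]
  linarith
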